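/- Let A' ⊆ E ∪ {a, γ} and A = A' \ {a, γ}. Suppose e ∉ cl(A) and either (1) A' = A and A contains an OX-circuit of M, or (2) A' = A ∪ {a}. Then cl'(A') = cl(A) ∪ {a}. -/

import Mathlib

open Set

namespace ESSplit

variable {α : Type*}

/-- A circuit of a matroid: a minimal dependent set. -/
def IsCircuit (M : Matroid α) (C : Set α) : Prop :=
  M.Dep C ∧ ∀ D, D ⊂ C → M.Indep D

/-- A binary matroid: one representable over GF(2). -/
def IsBinary (M : Matroid α) : Prop :=
  ∃ (n : ℕ) (φ : α → (Fin n → ZMod 2)),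
    ∀ I, I ⊆ M.E → (M.Indep I ↔ LinearIndependent (ZMod 2) (fun x : I => φ x.1))

/-- An OX-circuit: a circuit meeting `X` in an odd number of elements. -/
def IsOX (M : Matroid α) (X C : Set α) : Prop :=
  IsCircuit M C ∧ Odd (C ∩ X).ncard

/-- An EX-circuit: a circuit meeting `X` in an even number of elements. -/
def IsEX (M : Matroid α) (X C : Set α) : Prop :=
  IsCircuit M C ∧ Even (C ∩ X).ncard

/-- `D` is a union of two disjoint OX-circuits containing no EX-circuit. -/
def OXUnion (M : Matroid α) (X D : Set α) : Prop :=
  ∃ C₁ C₂, IsOX M X C₁ ∧ IsOX M X C₂ ∧ Disjoint C₁ C₂ ∧ D = C₁ ∪ C₂ ∧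
    ¬ ∃ C₀, IsEX M X C₀ ∧ C₀ ⊆ D

/-- The description of the circuits of the es-splitting matroid `M_X^e`. -/
def ESCircuit (M : Matroid α) (X : Set α) (e a γ : α) (C : Set α) : Prop :=
  C = {e, a, γ} ∨
  IsEX M X C ∨
  (OXUnion M X C ∧ ∀ D, OXUnion M X D → D ⊆ C → D = C) ∨
  (∃ C₀, IsOX M X C₀ ∧ C = C₀ ∪ {a}) ∨
  (∃ C₀, IsOX M X C₀ ∧ e ∉ C₀ ∧ C = C₀ ∪ {e, γ}) ∨
  (∃ C₀, IsOX M X C₀ ∧ e ∈ C₀ ∧ C = (C₀ \ {e}) ∪ {γ}) ∨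
  (∃ C₀, IsCircuit M C₀ ∧ e ∈ C₀ ∧ Odd (((C₀ \ {e}) ∩ X).ncard) ∧
      C = (C₀ \ {e}) ∪ {a, γ})

/-- `M'` is the es-splitting matroid `M_X^e` of `M` (with new elements `a`, `γ`):
it has ground set `M.E ∪ {a, γ}` and its circuits are exactly as described. -/
def IsESSplit (M M' : Matroid α) (X : Set α) (e a γ : α) : Prop :=
  M'.E = M.E ∪ {a, γ} ∧ ∀ C, IsCircuit M' C ↔ ESCircuit M X e a γ C

/-- The set `T(A)`. -/
def T (M : Matroid α) (X : Set α) (e : α) (A : Set α) : Set α :=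
  {x | x ∈ M.E \ A ∧ x ≠ e ∧ ∃ C, IsOX M X C ∧ x ∈ C ∧ e ∈ C ∧ C ⊆ A ∪ {e, x}}

/-- The set `F(A)`. -/
def F (M : Matroid α) (X A : Set α) : Set α :=
  {x | x ∈ M.closure A \ A ∧ ∃ C, IsOX M X C ∧ x ∈ C ∧ C ⊆ M.closure A}

/-- The rank of a set `A` in a (finite) matroid: the maximum size of an
independent subset of `A`. -/
noncomputable def rk (M : Matroid α) (A : Set α) : ℕ :=
  sSup {n | ∃ I, M.Indep I ∧ I ⊆ A ∧ I.ncard = n}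

end ESSplit

open ESSplit

namespace ESProof

variable {α : Type*}

section Char2

variable {V : Type*} [AddCommGroup V]

lemma finsum_mem_diff_c2 (hV : ∀ v : V, v + v = 0) {f : α → V} {S T : Set α}
    (hS : S.Finite) (hTS : T ⊆ S) :
    ∑ᶠ y ∈ S \ T, f y = (∑ᶠ y ∈ S, f y) + ∑ᶠ y ∈ T, f y := by
  have hT : T.Finite := hS.subset hTS
  have h2 : ∑ᶠ y ∈ S, f y = (∑ᶠ y ∈ S \ T, f y) + ∑ᶠ y ∈ T, f y := by
    conv_lhs => rw [← diff_union_of_subset hTS]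
    exact finsum_mem_union disjoint_sdiff_left (hS.subset diff_subset) hT
  rw [h2, add_assoc, hV, add_zero]

lemma finsum_mem_symmdiff_c2 (hV : ∀ v : V, v + v = 0) {f : α → V} {S T : Set α}
    (hS : S.Finite) (hT : T.Finite) :
    ∑ᶠ y ∈ (S \ T) ∪ (T \ S), f y = (∑ᶠ y ∈ S, f y) + ∑ᶠ y ∈ T, f y := by
  have h1 : ∑ᶠ y ∈ S \ T, f y = (∑ᶠ y ∈ S, f y) + ∑ᶠ y ∈ S ∩ T, f y := by
    rw [← diff_self_inter]; exact finsum_mem_diff_c2 hV hS inter_subset_left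
  have h2 : ∑ᶠ y ∈ T \ S, f y = (∑ᶠ y ∈ T, f y) + ∑ᶠ y ∈ S ∩ T, f y := by
    rw [← diff_self_inter, inter_comm S T]; exact finsum_mem_diff_c2 hV hT inter_subset_left
  rw [finsum_mem_union disjoint_sdiff_sdiff (hS.subset diff_subset) (hT.subset diff_subset),
    h1, h2, add_add_add_comm, hV, add_zero]

end Char2

/-- indicator of X with values in ZMod 2 -/
noncomputable def ind (X : Set α) (y : α) : ZMod 2 := Set.indicator X 1 y

lemma ind_of_mem {X : Set α} {y : α} (h : y ∈ X) : ind X y = 1 := by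
  simp [ind, Set.indicator_of_mem h]

lemma ind_of_not_mem {X : Set α} {y : α} (h : y ∉ X) : ind X y = 0 := by
  simp [ind, Set.indicator_of_notMem h]

lemma finsum_ind_eq (X : Set α) {S : Set α} (hS : S.Finite) :
    ∑ᶠ y ∈ S, ind X y = ((S ∩ X).ncard : ZMod 2) := by
  classical
  have hsupp : Function.support (ind X) = X := by
    ext y
    by_cases h : y ∈ X
    · simp [ind_of_mem h, h]
    · simp [ind_of_not_mem h, h]
  have h1 : ∑ᶠ y ∈ S, ind X y = ∑ᶠ y ∈ S ∩ X, ind X y := by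
    rw [← finsum_mem_inter_support, hsupp]
  have hfin : (S ∩ X).Finite := hS.inter_of_left X
  have h3 : ∑ᶠ y ∈ S ∩ X, ind X y = ∑ y ∈ hfin.toFinset, ind X y := by
    rw [← finsum_mem_coe_finset, hfin.coe_toFinset]
  have h4 : ∑ y ∈ hfin.toFinset, ind X y = ∑ _y ∈ hfin.toFinset, (1 : ZMod 2) :=
    Finset.sum_congr rfl fun x hx => ind_of_mem (hfin.mem_toFinset.1 hx).2
  rw [h1, h3, h4, Finset.sum_const, nsmul_eq_mul, mul_one,
    Set.ncard_eq_toFinset_card _ hfin]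

lemma even_iff_two_dvd' (n : ℕ) : Even n ↔ 2 ∣ n :=
  ⟨fun ⟨r, hr⟩ => ⟨r, by omega⟩, fun ⟨r, hr⟩ => ⟨r, by omega⟩⟩

lemma finsum_ind_eq_zero_iff (X : Set α) {S : Set α} (hS : S.Finite) :
    ∑ᶠ y ∈ S, ind X y = 0 ↔ Even (S ∩ X).ncard := by
  rw [finsum_ind_eq X hS, ZMod.natCast_eq_zero_iff, ← even_iff_two_dvd']

lemma finsum_ind_eq_one_iff (X : Set α) {S : Set α} (hS : S.Finite) :
    ∑ᶠ y ∈ S, ind X y = 1 ↔ Odd (S ∩ X).ncard := by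
  have h2 : ∀ x : ZMod 2, x = 1 ↔ ¬ x = 0 := by decide
  rw [h2, finsum_ind_eq_zero_iff X hS, Nat.not_even_iff_odd]

end ESProof

namespace ESProof

open ESSplit

variable {α : Type*} {M : Matroid α}

lemma circuit_subset_ground {C : Set α} (h : IsCircuit M C) : C ⊆ M.E :=
  h.1.subset_ground

lemma circuit_nonempty {C : Set α} (h : IsCircuit M C) : C.Nonempty :=
  h.1.nonempty

lemma exists_circuit_subset (hfinE : M.E.Finite) :
    ∀ (k : ℕ) (S : Set α), S.ncard ≤ k → M.Dep S → ∃ C, C ⊆ S ∧ IsCircuit M C := by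
  intro k
  induction k with
  | zero =>
    intro S hcard hS
    have hfin : S.Finite := hfinE.subset hS.subset_ground
    rw [Nat.le_zero, Set.ncard_eq_zero hfin] at hcard
    exact absurd (hcard ▸ M.empty_indep) hS.not_indep
  | succ k ih =>
    intro S hcard hS
    by_cases h : ∀ D, D ⊂ S → M.Indep D
    · exact ⟨S, subset_rfl, hS, h⟩
    · push_neg at h
      obtain ⟨D, hDS, hD⟩ := h
      have hfin : S.Finite := hfinE.subset hS.subset_ground
      have hlt : D.ncard < S.ncard := Set.ncard_lt_ncard hDS hfin
      obtain ⟨C, hCD, hC⟩ := ih D (by omega) ⟨hD, hDS.subset.trans hS.subset_ground⟩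
      exact ⟨C, hCD.trans hDS.subset, hC⟩

lemma mem_closure_of_circuit {C A : Set α} {x : α}
    (hC : IsCircuit M C) (hx : x ∈ C) (hCA : C ⊆ insert x A) : x ∈ M.closure A := by
  have hI : M.Indep (C \ {x}) := hC.2 _ (Set.sdiff_singleton_ssubset.2 hx)
  have hxC : x ∈ M.closure (C \ {x}) := by
    rw [hI.mem_closure_iff]
    left
    rw [insert_diff_singleton, insert_eq_of_mem hx]
    exact hC.1
  refine M.closure_subset_closure (fun y hy => ?_) hxC
  rcases hCA hy.1 with h | h
  · exact absurd h hy.2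
  · exact h

lemma exists_circuit_of_mem_closure (hfinE : M.E.Finite) {A : Set α} {x : α}
    (hA : A ⊆ M.E) (hx : x ∈ M.closure A) (hxA : x ∉ A) :
    ∃ C, IsCircuit M C ∧ x ∈ C ∧ C ⊆ insert x A := by
  obtain ⟨I, hI⟩ := M.exists_isBasis A hA
  have hxI : x ∈ M.closure I := by rwa [hI.closure_eq_closure]
  have hxI' : x ∉ I := fun h => hxA (hI.subset h)
  have hdep : M.Dep (insert x I) := (hI.indep.mem_closure_iff.1 hxI).resolve_right hxI'
  obtain ⟨C, hCS, hC⟩ := exists_circuit_subset hfinE (insert x I).ncard (insert x I) le_rfl hdep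
  refine ⟨C, hC, ?_, hCS.trans (insert_subset_insert hI.subset)⟩
  by_contra hxC
  refine hC.1.not_indep (hI.indep.subset fun y hy => ?_)
  rcases hCS hy with rfl | h
  · exact absurd hy hxC
  · exact h

end ESProof

namespace ESProof

open ESSplit

variable {α : Type*} {M : Matroid α} {n : ℕ} {φ : α → Fin n → ZMod 2}

lemma hV2 : ∀ v : Fin n → ZMod 2, v + v = 0 := fun v => funext fun i => by
  show v i + v i = 0
  exact CharTwo.add_self_eq_zero (v i)

lemma hVz : ∀ x : ZMod 2, x + x = 0 := by decide

lemma not_indep_iff_sum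
    (hrep : ∀ I, I ⊆ M.E → (M.Indep I ↔ LinearIndependent (ZMod 2) (fun x : I => φ x.1)))
    {S : Set α} (hS : S ⊆ M.E) :
    ¬ M.Indep S ↔ ∃ T, T ⊆ S ∧ T.Nonempty ∧ T.Finite ∧ ∑ᶠ y ∈ T, φ y = 0 := by
  rw [hrep S hS]
  have hcomp : (fun x : S => φ x.1) = (φ ∘ (Subtype.val : S → α)) := rfl
  rw [hcomp, linearIndependent_comp_subtype_iff, linearDepOn_iff']
  constructor
  · rintro ⟨f, hsupp, htot, hne⟩
    refine ⟨↑f.support, (Finsupp.mem_supported (ZMod 2) f).1 hsupp, ?_, f.support.finite_toSet, ?_⟩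
    · obtain ⟨y, hy⟩ := Finsupp.support_nonempty_iff.2 hne
      exact ⟨y, hy⟩
    · rw [finsum_mem_coe_finset]
      rw [Finsupp.linearCombination_apply, Finsupp.sum] at htot
      rw [← htot]
      refine Finset.sum_congr rfl fun y hy => ?_
      have h1 : f y = 1 := by
        have h0 := Finsupp.mem_support_iff.1 hy
        revert h0; generalize f y = z; revert z; decide
      rw [h1, one_smul]
  · rintro ⟨T, hTS, ⟨t, ht⟩, hTfin, hsum⟩
    classical
    set g : α →₀ ZMod 2 :=
      ⟨hTfin.toFinset, fun y => if y ∈ T then 1 else 0, by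
        intro a; by_cases h : a ∈ T <;> simp [h, hTfin.mem_toFinset]⟩ with hg
    have hgsupp : g.support = hTfin.toFinset := rfl
    have hgval : ∀ y, g y = if y ∈ T then 1 else 0 := fun y => rfl
    refine ⟨g, (Finsupp.mem_supported (ZMod 2) g).2 ?_, ?_, ?_⟩
    · rw [hgsupp]
      intro y hy
      exact hTS (hTfin.mem_toFinset.1 hy)
    · rw [Finsupp.linearCombination_apply, Finsupp.sum, hgsupp]
      have : ∀ y ∈ hTfin.toFinset, g y • φ y = φ y := by
        intro y hy
        rw [hgval, if_pos (hTfin.mem_toFinset.1 hy), one_smul]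
      rw [Finset.sum_congr rfl this]
      rw [← hsum, ← finsum_mem_coe_finset, hTfin.coe_toFinset]
    · intro h0
      have : g t = 0 := by rw [h0]; rfl
      rw [hgval, if_pos ht] at this
      exact one_ne_zero this

lemma dep_of_sum
    (hrep : ∀ I, I ⊆ M.E → (M.Indep I ↔ LinearIndependent (ZMod 2) (fun x : I => φ x.1)))
    {S : Set α} (hS : S ⊆ M.E) (hne : S.Nonempty) (hfinS : S.Finite)
    (hsum : ∑ᶠ y ∈ S, φ y = 0) : M.Dep S :=
  ⟨(not_indep_iff_sum hrep hS).2 ⟨S, subset_rfl, hne, hfinS, hsum⟩, hS⟩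

lemma circuit_sum
    (hrep : ∀ I, I ⊆ M.E → (M.Indep I ↔ LinearIndependent (ZMod 2) (fun x : I => φ x.1)))
    {C : Set α} (hC : IsCircuit M C) : ∑ᶠ y ∈ C, φ y = 0 := by
  obtain ⟨T, hTC, hTne, hTfin, hsum⟩ :=
    (not_indep_iff_sum hrep (circuit_subset_ground hC)).1 hC.1.not_indep
  have hTCeq : T = C := by
    by_contra hne'
    exact (dep_of_sum hrep (hTC.trans (circuit_subset_ground hC)) hTne hTfin hsum).not_indep
      (hC.2 T (Set.ssubset_iff_subset_ne.2 ⟨hTC, hne'⟩))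
  rwa [hTCeq] at hsum

lemma exists_circuit_mem
    (hrep : ∀ I, I ⊆ M.E → (M.Indep I ↔ LinearIndependent (ZMod 2) (fun x : I => φ x.1)))
    (hfinE : M.E.Finite) :
    ∀ (k : ℕ) (S : Set α), S.ncard ≤ k → S ⊆ M.E → (∑ᶠ y ∈ S, φ y = 0) →
      ∀ x ∈ S, ∃ C, IsCircuit M C ∧ x ∈ C ∧ C ⊆ S := by
  intro k
  induction k with
  | zero =>
    intro S hcard hSE _ x hx
    have hfin : S.Finite := hfinE.subset hSE
    rw [Nat.le_zero, Set.ncard_eq_zero hfin] at hcard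
    exact absurd (hcard ▸ hx) (Set.notMem_empty x)
  | succ k ih =>
    intro S hcard hSE hsum x hx
    have hfin : S.Finite := hfinE.subset hSE
    have hdep : M.Dep S := dep_of_sum hrep hSE ⟨x, hx⟩ hfin hsum
    obtain ⟨D, hDS, hD⟩ := exists_circuit_subset hfinE S.ncard S le_rfl hdep
    by_cases hxD : x ∈ D
    · exact ⟨D, hD, hxD, hDS⟩
    · obtain ⟨d, hd⟩ := (circuit_nonempty hD)
      have hss : S \ D ⊂ S := ⟨diff_subset, fun h => (h (hDS hd)).2 hd⟩
      have hlt : (S \ D).ncard < S.ncard := Set.ncard_lt_ncard hss hfin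
      have hsum' : ∑ᶠ y ∈ S \ D, φ y = 0 := by
        rw [finsum_mem_diff_c2 hV2 hfin hDS, hsum, circuit_sum hrep hD, add_zero]
      obtain ⟨C, hC, hxC, hCS⟩ :=
        ih (S \ D) (by omega) (diff_subset.trans hSE) hsum' x ⟨hx, hxD⟩
      exact ⟨C, hC, hxC, hCS.trans diff_subset⟩

lemma exists_OX_subset
    (hrep : ∀ I, I ⊆ M.E → (M.Indep I ↔ LinearIndependent (ZMod 2) (fun x : I => φ x.1)))
    (hfinE : M.E.Finite) (X : Set α) :
    ∀ (k : ℕ) (S : Set α), S.ncard ≤ k → S ⊆ M.E → (∑ᶠ y ∈ S, φ y = 0) →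
      (∑ᶠ y ∈ S, ind X y = 1) → ∃ C, IsOX M X C ∧ C ⊆ S := by
  intro k
  induction k with
  | zero =>
    intro S hcard hSE _ hind
    have hfin : S.Finite := hfinE.subset hSE
    rw [Nat.le_zero, Set.ncard_eq_zero hfin] at hcard
    rw [hcard, finsum_mem_empty] at hind
    exact absurd hind.symm one_ne_zero
  | succ k ih =>
    intro S hcard hSE hsum hind
    have hfin : S.Finite := hfinE.subset hSE
    have hSne : S.Nonempty := by
      rcases Set.eq_empty_or_nonempty S with rfl | h
      · rw [finsum_mem_empty] at hind; exact absurd hind.symm one_ne_zero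
      · exact h
    have hdep : M.Dep S := dep_of_sum hrep hSE hSne hfin hsum
    obtain ⟨D, hDS, hD⟩ := exists_circuit_subset hfinE S.ncard S le_rfl hdep
    have hDfin : D.Finite := hfin.subset hDS
    by_cases hD1 : ∑ᶠ y ∈ D, ind X y = 1
    · exact ⟨D, ⟨hD, (finsum_ind_eq_one_iff X hDfin).1 hD1⟩, hDS⟩
    · have hD0 : ∑ᶠ y ∈ D, ind X y = 0 := by
        revert hD1; generalize (∑ᶠ y ∈ D, ind X y) = z; revert z; decide
      obtain ⟨d, hd⟩ := (circuit_nonempty hD)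
      have hss : S \ D ⊂ S := ⟨diff_subset, fun h => (h (hDS hd)).2 hd⟩
      have hlt : (S \ D).ncard < S.ncard := Set.ncard_lt_ncard hss hfin
      have hsum' : ∑ᶠ y ∈ S \ D, φ y = 0 := by
        rw [finsum_mem_diff_c2 hV2 hfin hDS, hsum, circuit_sum hrep hD, add_zero]
      have hind' : ∑ᶠ y ∈ S \ D, ind X y = 1 := by
        rw [finsum_mem_diff_c2 hVz hfin hDS, hind, hD0, add_zero]
      obtain ⟨C, hC, hCS⟩ := ih (S \ D) (by omega) (diff_subset.trans hSE) hsum' hind'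
      exact ⟨C, hC, hCS.trans diff_subset⟩

end ESProof

namespace ESProof

open ESSplit

variable {α : Type*} {M : Matroid α} {n : ℕ} {φ : α → Fin n → ZMod 2}

lemma key_lemma
    (hrep : ∀ I, I ⊆ M.E → (M.Indep I ↔ LinearIndependent (ZMod 2) (fun x : I => φ x.1)))
    (hfinE : M.E.Finite) (X : Set α) {x : α} :
    ∀ (k : ℕ) (U : Set α), U.ncard ≤ k → U ⊆ M.E → x ∈ U →
      (∑ᶠ y ∈ U, φ y = 0) → (∑ᶠ y ∈ U, ind X y = 0) →
      ∃ C', x ∈ C' ∧ C' ⊆ U ∧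
        (IsEX M X C' ∨ (OXUnion M X C' ∧ ∀ D, OXUnion M X D → D ⊆ C' → D = C')) := by
  intro k
  induction k with
  | zero =>
    intro U hcard hUE hxU _ _
    have hfin : U.Finite := hfinE.subset hUE
    rw [Nat.le_zero, Set.ncard_eq_zero hfin] at hcard
    exact absurd (hcard ▸ hxU) (Set.notMem_empty x)
  | succ k ih =>
    intro U hcard hUE hxU hsum hind
    have hUfin : U.Finite := hfinE.subset hUE
    obtain ⟨D₁, hD₁, hxD₁, hD₁U⟩ :=
      exists_circuit_mem hrep hfinE U.ncard U le_rfl hUE hsum x hxU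
    have hD₁fin : D₁.Finite := hUfin.subset hD₁U
    by_cases hD1even : ∑ᶠ y ∈ D₁, ind X y = 0
    · exact ⟨D₁, hxD₁, hD₁U, Or.inl ⟨hD₁, (finsum_ind_eq_zero_iff X hD₁fin).1 hD1even⟩⟩
    have hD1odd : ∑ᶠ y ∈ D₁, ind X y = 1 := by
      revert hD1even; generalize (∑ᶠ y ∈ D₁, ind X y) = z; revert z; decide
    have hsum2 : ∑ᶠ y ∈ U \ D₁, φ y = 0 := by
      rw [finsum_mem_diff_c2 hV2 hUfin hD₁U, hsum, circuit_sum hrep hD₁, add_zero]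
    have hind2 : ∑ᶠ y ∈ U \ D₁, ind X y = 1 := by
      rw [finsum_mem_diff_c2 hVz hUfin hD₁U, hind, hD1odd, zero_add]
    obtain ⟨D₂, hD₂OX, hD₂sub⟩ := exists_OX_subset hrep hfinE X (U \ D₁).ncard (U \ D₁) le_rfl
      (diff_subset.trans hUE) hsum2 hind2
    have hdisj : Disjoint D₁ D₂ := disjoint_sdiff_self_right.mono_right hD₂sub
    have hWU : D₁ ∪ D₂ ⊆ U := union_subset hD₁U (hD₂sub.trans diff_subset)
    set W := D₁ ∪ D₂ with hW
    have hWfin : W.Finite := hUfin.subset hWU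
    have hD₂fin : D₂.Finite := hWfin.subset subset_union_right
    have hxW : x ∈ W := Or.inl hxD₁
    have hD2odd : ∑ᶠ y ∈ D₂, ind X y = 1 := (finsum_ind_eq_one_iff X hD₂fin).2 hD₂OX.2
    have hWsum : ∑ᶠ y ∈ W, φ y = 0 := by
      rw [hW, finsum_mem_union hdisj hD₁fin hD₂fin, circuit_sum hrep hD₁,
        circuit_sum hrep hD₂OX.1, add_zero]
    have hWind : ∑ᶠ y ∈ W, ind X y = 0 := by
      rw [hW, finsum_mem_union hdisj hD₁fin hD₂fin, hD1odd, hD2odd]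
      decide
    by_cases hEX : ∃ C₀, IsEX M X C₀ ∧ C₀ ⊆ W
    · obtain ⟨C₀, hC₀, hC₀W⟩ := hEX
      by_cases hxC₀ : x ∈ C₀
      · exact ⟨C₀, hxC₀, hC₀W.trans hWU, Or.inl hC₀⟩
      · obtain ⟨c, hc⟩ := circuit_nonempty hC₀.1
        have hC₀U : C₀ ⊆ U := hC₀W.trans hWU
        have hss : W \ C₀ ⊂ U := ⟨diff_subset.trans hWU, fun h => (h (hC₀U hc)).2 hc⟩
        have hlt : (W \ C₀).ncard < U.ncard := Set.ncard_lt_ncard hss hUfin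
        have h1 : ∑ᶠ y ∈ W \ C₀, φ y = 0 := by
          rw [finsum_mem_diff_c2 hV2 hWfin hC₀W, hWsum, circuit_sum hrep hC₀.1, add_zero]
        have h0 : ∑ᶠ y ∈ C₀, ind X y = 0 := (finsum_ind_eq_zero_iff X (hWfin.subset hC₀W)).2 hC₀.2
        have h2 : ∑ᶠ y ∈ W \ C₀, ind X y = 0 := by
          rw [finsum_mem_diff_c2 hVz hWfin hC₀W, hWind, h0, add_zero]
        obtain ⟨C', hxC', hC'sub, hres⟩ := ih (W \ C₀) (by omega)
          (diff_subset.trans (hWU.trans hUE)) ⟨hxW, hxC₀⟩ h1 h2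
        exact ⟨C', hxC', hC'sub.trans (diff_subset.trans hWU), hres⟩
    · have hWOX : OXUnion M X W :=
        ⟨D₁, D₂, ⟨hD₁, (finsum_ind_eq_one_iff X hD₁fin).1 hD1odd⟩, hD₂OX, hdisj, hW, hEX⟩
      have h𝒮fin : {D | OXUnion M X D ∧ D ⊆ W}.Finite :=
        hWfin.finite_subsets.subset fun D hD => hD.2
      obtain ⟨D, hD𝒮, hmin⟩ := Set.exists_min_image {D | OXUnion M X D ∧ D ⊆ W} Set.ncard h𝒮fin
        ⟨W, hWOX, subset_rfl⟩
      have hminimal : ∀ D', OXUnion M X D' → D' ⊆ D → D' = D := fun D' hD' hsub =>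
        Set.eq_of_subset_of_ncard_le hsub (hmin D' ⟨hD', hsub.trans hD𝒮.2⟩) (hWfin.subset hD𝒮.2)
      by_cases hxD : x ∈ D
      · exact ⟨D, hxD, hD𝒮.2.trans hWU, Or.inr ⟨hD𝒮.1, hminimal⟩⟩
      · obtain ⟨E₁, E₂, hE₁, hE₂, hdisjE, hDeq, -⟩ := hD𝒮.1
        obtain ⟨d, hd⟩ := circuit_nonempty hE₁.1
        have hdD : d ∈ D := hDeq ▸ Or.inl hd
        have hDW : D ⊆ W := hD𝒮.2
        have hDfin : D.Finite := hWfin.subset hDW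
        have hE₁fin : E₁.Finite := hDfin.subset (hDeq ▸ subset_union_left)
        have hE₂fin : E₂.Finite := hDfin.subset (hDeq ▸ subset_union_right)
        have hDsum : ∑ᶠ y ∈ D, φ y = 0 := by
          rw [hDeq, finsum_mem_union hdisjE hE₁fin hE₂fin, circuit_sum hrep hE₁.1,
            circuit_sum hrep hE₂.1, add_zero]
        have hDind : ∑ᶠ y ∈ D, ind X y = 0 := by
          rw [hDeq, finsum_mem_union hdisjE hE₁fin hE₂fin,
            (finsum_ind_eq_one_iff X hE₁fin).2 hE₁.2, (finsum_ind_eq_one_iff X hE₂fin).2 hE₂.2]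
          decide
        have hss : W \ D ⊂ U := ⟨diff_subset.trans hWU, fun h => (h (hWU (hDW hdD))).2 hdD⟩
        have hlt : (W \ D).ncard < U.ncard := Set.ncard_lt_ncard hss hUfin
        have h1 : ∑ᶠ y ∈ W \ D, φ y = 0 := by
          rw [finsum_mem_diff_c2 hV2 hWfin hDW, hWsum, hDsum, add_zero]
        have h2 : ∑ᶠ y ∈ W \ D, ind X y = 0 := by
          rw [finsum_mem_diff_c2 hVz hWfin hDW, hWind, hDind, add_zero]
        obtain ⟨C', hxC', hC'sub, hres⟩ := ih (W \ D) (by omega)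
          (diff_subset.trans (hWU.trans hUE)) ⟨hxW, hxD⟩ h1 h2
        exact ⟨C', hxC', hC'sub.trans (diff_subset.trans hWU), hres⟩

end ESProof

open ESProof in
theorem closure_eq_closure_union_a
    {α : Type*} (M M' : Matroid α) (X : Set α) (e a γ : α)
    (hfin : M.E.Finite) (hbin : IsBinary M)
    (hXE : X ⊆ M.E) (heX : e ∈ X) (haE : a ∉ M.E) (hγE : γ ∉ M.E) (haγ : a ≠ γ)
    (hsplit : IsESSplit M M' X e a γ)
    (A' A : Set α) (hA'sub : A' ⊆ M.E ∪ {a, γ}) (hA : A = A' \ {a, γ})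
    (heA : e ∉ M.closure A)
    (hcase : (A' = A ∧ ∃ C, IsOX M X C ∧ C ⊆ A) ∨ A' = A ∪ {a}) :
    M'.closure A' = M.closure A ∪ {a} := by
  obtain ⟨hE', hcirc⟩ := hsplit
  obtain ⟨n, φ, hrep⟩ := hbin
  have hAE : A ⊆ M.E := by
    intro y hy
    rw [hA] at hy
    rcases hA'sub hy.1 with h | h
    · exact h
    · exact absurd h hy.2
  have hA'E : A' ⊆ M'.E := by rw [hE']; exact hA'sub
  have haE' : a ∈ M'.E := by rw [hE']; exact Or.inr (Or.inl rfl)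
  have hAA' : A ⊆ A' := by
    rcases hcase with ⟨h1, -⟩ | h2
    · exact h1 ▸ subset_rfl
    · exact h2 ▸ subset_union_left
  have hA'A : A' ⊆ insert a A := by
    rcases hcase with ⟨h1, -⟩ | h2
    · exact h1 ▸ subset_insert a A
    · rw [h2, union_singleton]
  have haA : a ∉ A := fun h => haE (hAE h)
  have hγA : γ ∉ A := fun h => hγE (hAE h)
  have hγA' : γ ∉ A' := fun h => by
    rcases hA'A h with h1 | h1
    · exact haγ h1.symm
    · exact hγA h1
  have heE : e ∈ M.E := hXE heX
  have heAm : e ∉ A := fun h => heA (M.subset_closure A hAE h)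
  have heA' : e ∉ A' := fun h => by
    rcases hA'A h with h1 | h1
    · exact haE (h1 ▸ heE)
    · exact heAm h1
  have hE'fin : M'.E.Finite := by
    rw [hE']
    exact hfin.union ((Set.finite_singleton γ).insert a)
  have mem_cl' : ∀ (C' : Set α) (x : α), ESCircuit M X e a γ C' → x ∈ C' →
      C' ⊆ insert x A' → x ∈ M'.closure A' :=
    fun C' x hC' hx hsub => mem_closure_of_circuit ((hcirc C').2 hC') hx hsub
  -- a ∈ cl'(A')
  have ha_mem : a ∈ M'.closure A' := by
    rcases hcase with ⟨hA'eq, C, hCOX, hCA⟩ | hA'eq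
    · refine mem_cl' (C ∪ {a}) a (Or.inr (Or.inr (Or.inr (Or.inl ⟨C, hCOX, rfl⟩))))
        (Or.inr rfl) ?_
      rw [union_singleton]
      exact insert_subset_insert (hA'eq ▸ hCA)
    · exact M'.subset_closure A' hA'E (hA'eq ▸ Or.inr rfl)
  -- cl(A) ⊆ cl'(A')
  have hclA_sub : M.closure A ⊆ M'.closure A' := by
    intro x hx
    by_cases hxA : x ∈ A
    · exact M'.subset_closure A' hA'E (hAA' hxA)
    obtain ⟨Cx, hCx, hxCx, hCxA⟩ := exists_circuit_of_mem_closure hfin hAE hx hxA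
    have hCxE : Cx ⊆ M.E := circuit_subset_ground hCx
    have hCxfin : Cx.Finite := hfin.subset hCxE
    by_cases heven : ∑ᶠ y ∈ Cx, ind X y = 0
    · exact mem_cl' Cx x (Or.inr (Or.inl ⟨hCx, (finsum_ind_eq_zero_iff X hCxfin).1 heven⟩)) hxCx
        (hCxA.trans (insert_subset_insert hAA'))
    have hodd : ∑ᶠ y ∈ Cx, ind X y = 1 := by
      revert heven; generalize (∑ᶠ y ∈ Cx, ind X y) = z; revert z; decide
    have hCxOX : IsOX M X Cx := ⟨hCx, (finsum_ind_eq_one_iff X hCxfin).1 hodd⟩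
    rcases hcase with ⟨hA'eq, C, hCOX, hCA⟩ | hA'eq
    · -- case 1 : binary argument
      have hxC : x ∉ C := fun h => hxA (hCA h)
      have hCE : C ⊆ M.E := circuit_subset_ground hCOX.1
      have hCfin : C.Finite := hfin.subset hCE
      have hUE : (Cx \ C) ∪ (C \ Cx) ⊆ M.E :=
        union_subset (diff_subset.trans hCxE) (diff_subset.trans hCE)
      have hxU : x ∈ (Cx \ C) ∪ (C \ Cx) := Or.inl ⟨hxCx, hxC⟩
      have hUsum : ∑ᶠ y ∈ (Cx \ C) ∪ (C \ Cx), φ y = 0 := by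
        rw [finsum_mem_symmdiff_c2 hV2 hCxfin hCfin, circuit_sum hrep hCx,
          circuit_sum hrep hCOX.1, add_zero]
      have hUind : ∑ᶠ y ∈ (Cx \ C) ∪ (C \ Cx), ind X y = 0 := by
        rw [finsum_mem_symmdiff_c2 hVz hCxfin hCfin, hodd,
          (finsum_ind_eq_one_iff X hCfin).2 hCOX.2]
        decide
      obtain ⟨C', hxC', hC'U, hres⟩ := key_lemma hrep hfin X ((Cx \ C) ∪ (C \ Cx)).ncard
        ((Cx \ C) ∪ (C \ Cx)) le_rfl hUE hxU hUsum hUind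
      have hC'A : C' ⊆ insert x A' := by
        refine hC'U.trans (union_subset ?_ ?_)
        · intro y hy
          rcases hCxA hy.1 with rfl | h
          · exact Or.inl rfl
          · exact Or.inr (hAA' h)
        · intro y hy
          exact Or.inr (hAA' (hCA hy.1))
      rcases hres with hEXc | hOXc
      · exact mem_cl' C' x (Or.inr (Or.inl hEXc)) hxC' hC'A
      · exact mem_cl' C' x (Or.inr (Or.inr (Or.inl hOXc))) hxC' hC'A
    · -- case 2 : use Cx ∪ {a}
      refine mem_cl' (Cx ∪ {a}) x (Or.inr (Or.inr (Or.inr (Or.inl ⟨Cx, hCxOX, rfl⟩))))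
        (Or.inl hxCx) (union_subset (hCxA.trans (insert_subset_insert hAA')) ?_)
      intro y hy
      rw [mem_singleton_iff] at hy
      subst hy
      exact Or.inr (hA'eq ▸ Or.inr rfl)
  -- cl'(A') ⊆ cl(A) ∪ {a}
  have hsub : M'.closure A' ⊆ M.closure A ∪ {a} := by
    intro x hx
    have hxE' : x ∈ M'.E := M'.closure_subset_ground A' hx
    by_cases hxa : x = a
    · exact Or.inr (by rw [hxa]; exact rfl)
    by_cases hxA' : x ∈ A'
    · left
      refine M.subset_closure A hAE ?_
      rcases hA'A hxA' with h1 | h1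
      · exact absurd h1 hxa
      · exact h1
    obtain ⟨C', hC'circ, hxC', hC'sub⟩ := exists_circuit_of_mem_closure hE'fin hA'E hx hxA'
    have hC'es : ESCircuit M X e a γ C' := (hcirc C').1 hC'circ
    by_cases hxγ : x = γ
    · exfalso
      subst hxγ
      have heins : e ∉ insert x A' := by
        rintro (rfl | h)
        · exact hγE heE
        · exact heA' h
      have hsubA2 : ∀ {C₀ : Set α}, C₀ ⊆ M.E → (C₀ \ {e}) ⊆ insert x A' → C₀ \ {e} ⊆ A := by
        intro C₀ h1 h2 y hy
        have hyE : y ∈ M.E := h1 hy.1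
        rcases h2 hy with rfl | h3
        · exact absurd hyE hγE
        rcases hA'A h3 with rfl | h4
        · exact absurd hyE haE
        · exact h4
      rcases hC'es with h | h | h | h | h | h | h
      · exact heins (hC'sub (by rw [h]; exact Or.inl rfl))
      · exact hγE (circuit_subset_ground h.1 hxC')
      · obtain ⟨C₁, C₂, h1, h2, -, hCeq, -⟩ := h.1
        rw [hCeq] at hxC'
        rcases hxC' with hh | hh
        · exact hγE (circuit_subset_ground h1.1 hh)
        · exact hγE (circuit_subset_ground h2.1 hh)
      · obtain ⟨C₀, hC₀, hCeq⟩ := h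
        rw [hCeq] at hxC'
        rcases hxC' with hh | hh
        · exact hγE (circuit_subset_ground hC₀.1 hh)
        · exact haγ ((mem_singleton_iff.1 hh).symm)
      · obtain ⟨C₀, hC₀, he₀, hCeq⟩ := h
        exact heins (hC'sub (by rw [hCeq]; exact Or.inr (Or.inl rfl)))
      · obtain ⟨C₀, hC₀, he₀, hCeq⟩ := h
        have hC₀A : C₀ \ {e} ⊆ A := by
          refine hsubA2 (circuit_subset_ground hC₀.1) ?_
          intro y hy
          exact hC'sub (by rw [hCeq]; exact Or.inl hy)
        refine heA (mem_closure_of_circuit hC₀.1 he₀ ?_)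
        intro y hy
        by_cases hye : y = e
        · exact Or.inl hye
        · exact Or.inr (hC₀A ⟨hy, hye⟩)
      · obtain ⟨C₀, hC₀, he₀, hoddd, hCeq⟩ := h
        have hC₀A : C₀ \ {e} ⊆ A := by
          refine hsubA2 (circuit_subset_ground hC₀) ?_
          intro y hy
          have := hC'sub (show y ∈ C' by rw [hCeq]; exact Or.inl hy)
          rcases this with rfl | h3
          · exact Or.inl rfl
          · exact Or.inr h3
        refine heA (mem_closure_of_circuit hC₀ he₀ ?_)
        intro y hy
        by_cases hye : y = e
        · exact Or.inl hye
        · exact Or.inr (hC₀A ⟨hy, hye⟩)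
    · -- x ∈ E, x ≠ a, x ≠ γ
      left
      have hxE : x ∈ M.E := by
        rw [hE'] at hxE'
        rcases hxE' with h | h
        · exact h
        rcases h with h | h
        · exact absurd h hxa
        · exact absurd h hxγ
      have hγins : γ ∉ insert x A' := by
        rintro (rfl | h)
        · exact hxγ rfl
        · exact hγA' h
      have hsubE : ∀ {C₀ : Set α}, C₀ ⊆ M.E → C₀ ⊆ insert x A' → C₀ ⊆ insert x A := by
        intro C₀ h1 h2 y hy
        rcases h2 hy with rfl | h3
        · exact Or.inl rfl
        rcases hA'A h3 with rfl | h4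
        · exact absurd (h1 hy) haE
        · exact Or.inr h4
      rcases hC'es with h | h | h | h | h | h | h
      · exact absurd (hC'sub (by rw [h]; exact Or.inr (Or.inr rfl))) hγins
      · exact mem_closure_of_circuit h.1 hxC' (hsubE (circuit_subset_ground h.1) hC'sub)
      · obtain ⟨C₁, C₂, h1, h2, -, hCeq, -⟩ := h.1
        rw [hCeq] at hxC' hC'sub
        rcases hxC' with hh | hh
        · exact mem_closure_of_circuit h1.1 hh
            (hsubE (circuit_subset_ground h1.1) (subset_union_left.trans hC'sub))
        · exact mem_closure_of_circuit h2.1 hh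
            (hsubE (circuit_subset_ground h2.1) (subset_union_right.trans hC'sub))
      · obtain ⟨C₀, hC₀, hCeq⟩ := h
        rw [hCeq] at hxC' hC'sub
        have hxC₀ : x ∈ C₀ := by
          rcases hxC' with hh | hh
          · exact hh
          · exact absurd (mem_singleton_iff.1 hh) hxa
        exact mem_closure_of_circuit hC₀.1 hxC₀
          (hsubE (circuit_subset_ground hC₀.1) (subset_union_left.trans hC'sub))
      · obtain ⟨C₀, hC₀, he₀, hCeq⟩ := h
        exact absurd (hC'sub (by rw [hCeq]; exact Or.inr (Or.inr rfl))) hγins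
      · obtain ⟨C₀, hC₀, he₀, hCeq⟩ := h
        exact absurd (hC'sub (by rw [hCeq]; exact Or.inr rfl)) hγins
      · obtain ⟨C₀, hC₀, he₀, hoddd, hCeq⟩ := h
        exact absurd (hC'sub (by rw [hCeq]; exact Or.inr (Or.inr rfl))) hγins
  exact subset_antisymm hsub (union_subset hclA_sub (singleton_subset_iff.2 ha_mem))
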